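/- arXiv:math/0506303 — 2 statements merged into one kernel-verified Lean document; each statement's English description precedes it below -/
import Mathlib

section
/- Let γ be the growth function of the Mealy automaton A₂. Then γ(1) = 2, γ(2) = 4, γ(3) = 7, and for every integer n ≥ 2, γ(2n) = 8 and γ(2n+1) = 9. In particular γ is non-monotonic (γ(2n+1) = 9 > 8 = γ(2n+2) for n ≥ 2) and of constant growth order. -/
set_option maxHeartbeats 2000000


/-- The sequence of states visited by a Mealy automaton with transition function `tr`,
started at state `q`, while reading the infinite word `u`. -/
def stateSeq {X Q : Type*} (tr : X → Q → Q) (q : Q) (u : ℕ → X) : ℕ → Q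
  | 0 => q
  | k + 1 => tr (u k) (stateSeq tr q u k)

/-- The automatic transformation of infinite words defined by the Mealy automaton with
transition function `tr` and output function `out` at the state `q`. -/
def autTrans {X Q : Type*} (tr : X → Q → Q) (out : X → Q → X) (q : Q) (u : ℕ → X) : ℕ → X :=
  fun n => out (u n) (stateSeq tr q u n)

/-- The transformation given by a word of states: the product (composition, applied from
right to left) of the corresponding automatic transformations. -/
def wordTrans {X Q : Type*} (tr : X → Q → Q) (out : X → Q → X) (w : List Q) :
    (ℕ → X) → (ℕ → X) :=
  (w.map (autTrans tr out)).foldr (· ∘ ·) id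

/-- The growth function of a Mealy automaton: `growth tr out n` is the number of distinct
transformations of infinite words obtained as compositions of exactly `n` automatic
transformations of the automaton. -/
noncomputable def growth {X Q : Type*} (tr : X → Q → Q) (out : X → Q → X) (n : ℕ) : ℕ :=
  Set.ncard { g : (ℕ → X) → (ℕ → X) | ∃ w : List Q, w.length = n ∧ wordTrans tr out w = g }

/-- The `i`-th finite difference of a function `γ`. -/
def fdiff (γ : ℕ → ℤ) : ℕ → ℕ → ℤ
  | 0, n => γ n
  | i + 1, n => fdiff γ i n - fdiff γ i (n - 1)

/-- Output function of the automaton `A₂`: at `q0` the outputs of `(x0,x1,x2,x3)` are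
`(x1,x1,x0,x0)`; at `q1` they are `(x0,x2,x0,x1)`. -/
def a2Out : Fin 4 → Fin 2 → Fin 4 := fun x q =>
  if q = 0 then (if x = 0 then 1 else if x = 1 then 1 else 0)
  else (if x = 0 then 0 else if x = 1 then 2 else if x = 2 then 0 else 1)

/-- Transition function of the automaton `A₂`: all transitions from `q0` stay at `q0`;
from `q1` the transition goes to `q0` on reading `x0` and stays at `q1` otherwise. -/
def a2Tr : Fin 4 → Fin 2 → Fin 2 := fun x q =>
  if q = 0 then 0 else (if x = 0 then 0 else 1)

/-! ### Auxiliary machinery -/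

section Generic

variable {X Q Q1 Q2 : Type*}

theorem stateSeq_bisim (tr1 : X → Q1 → Q1) (out1 : X → Q1 → X)
    (tr2 : X → Q2 → Q2) (out2 : X → Q2 → X) (R : Q1 → Q2 → Prop)
    (hout : ∀ q1 q2, R q1 q2 → ∀ x, out1 x q1 = out2 x q2)
    (htr : ∀ q1 q2, R q1 q2 → ∀ x, R (tr1 x q1) (tr2 x q2))
    {q1 : Q1} {q2 : Q2} (h : R q1 q2) :
    autTrans tr1 out1 q1 = autTrans tr2 out2 q2 := by
  funext u n
  have key : ∀ n, R (stateSeq tr1 q1 u n) (stateSeq tr2 q2 u n) := by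
    intro n
    induction n with
    | zero => exact h
    | succ k ih => exact htr _ _ ih (u k)
  exact hout _ _ (key n) (u n)

theorem autTrans_comp (tr1 : X → Q1 → Q1) (out1 : X → Q1 → X)
    (tr2 : X → Q2 → Q2) (out2 : X → Q2 → X) (q1 : Q1) (q2 : Q2) :
    autTrans tr1 out1 q1 ∘ autTrans tr2 out2 q2 =
      autTrans (fun x p => (tr1 (out2 x p.2) p.1, tr2 x p.2))
        (fun x p => out1 (out2 x p.2) p.1) (q1, q2) := by
  funext u n
  have key : ∀ n, stateSeq (fun x (p : Q1 × Q2) => (tr1 (out2 x p.2) p.1, tr2 x p.2))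
      (q1, q2) u n = (stateSeq tr1 q1 (autTrans tr2 out2 q2 u) n, stateSeq tr2 q2 u n) := by
    intro n
    induction n with
    | zero => rfl
    | succ k ih => simp [stateSeq, ih, autTrans]
  simp [Function.comp, autTrans, key n]

theorem stateSeq_shift (tr : X → Q → Q) (q : Q) (u : ℕ → X) (n : ℕ) :
    stateSeq tr q u (n + 1) = stateSeq tr (tr (u 0) q) (fun k => u (k + 1)) n := by
  induction n with
  | zero => rfl
  | succ k ih =>
    show tr (u (k + 1)) (stateSeq tr q u (k + 1)) = _
    rw [ih]
    rfl

theorem autTrans_shift (tr : X → Q → Q) (out : X → Q → X) (q : Q) (u : ℕ → X) (n : ℕ) :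
    autTrans tr out q u (n + 1) = autTrans tr out (tr (u 0) q) (fun k => u (k + 1)) n := by
  simp [autTrans, stateSeq_shift]

theorem wordTrans_cons (tr : X → Q → Q) (out : X → Q → X) (q : Q) (w : List Q) :
    wordTrans tr out (q :: w) = autTrans tr out q ∘ wordTrans tr out w := rfl

end Generic

/-! ### The minimized machine of the semigroup of `A₂` -/

def a2moutL : List (List (Fin 4)) :=
  [[1, 0, 1, 1, 2, 0, 0, 1, 2, 2, 0, 0, 0, 0, 0, 2, 0, 0, 1, 0, 0, 0, 0, 1, 2, 0, 0, 0, 1, 2, 0, 0, 0, 2, 0, 0, 0],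
   [1, 2, 1, 0, 2, 0, 0, 1, 2, 0, 0, 0, 0, 1, 0, 2, 0, 0, 1, 0, 2, 0, 0, 0, 2, 0, 0, 0, 1, 0, 0, 0, 1, 2, 0, 0, 0],
   [0, 0, 1, 1, 0, 0, 1, 1, 2, 2, 0, 0, 0, 0, 2, 2, 0, 0, 0, 0, 0, 0, 0, 1, 0, 0, 0, 1, 1, 2, 0, 0, 0, 2, 0, 0, 0],
   [0, 1, 1, 1, 0, 2, 1, 0, 2, 2, 0, 0, 0, 0, 2, 0, 0, 0, 0, 1, 0, 0, 0, 1, 0, 2, 0, 1, 0, 2, 0, 0, 0, 0, 0, 1, 0]]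

def a2mtrL : List (List (Fin 37)) :=
  [[0, 0, 2, 2, 4, 2, 6, 2, 8, 8, 10, 2, 12, 12, 2, 8, 12, 2, 2, 12, 2, 2, 12, 2, 8, 2, 2, 12, 2, 8, 12, 2, 12, 8, 12, 12, 12],
   [0, 1, 2, 3, 4, 5, 6, 7, 8, 2, 10, 7, 12, 2, 2, 15, 2, 2, 2, 19, 8, 2, 22, 12, 8, 2, 12, 12, 2, 2, 12, 2, 2, 8, 2, 12, 12],
   [0, 1, 2, 3, 2, 3, 2, 2, 8, 9, 2, 2, 12, 13, 8, 8, 16, 2, 12, 12, 2, 12, 12, 2, 2, 2, 2, 2, 2, 8, 2, 2, 12, 8, 12, 12, 12],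
   [0, 1, 2, 3, 2, 5, 2, 7, 8, 9, 2, 11, 12, 13, 8, 2, 16, 2, 12, 2, 2, 12, 2, 2, 2, 8, 2, 2, 12, 8, 2, 12, 12, 2, 12, 2, 2]]

def a2lmulL : List (List (Fin 37)) :=
  [[2, 3, 2, 2, 6, 7, 2, 2, 12, 13, 2, 2, 2, 2, 18, 19, 2, 2, 2, 2, 23, 2, 2, 2, 27, 28, 2, 2, 2, 32, 2, 2, 2, 35, 2, 2, 2],
   [4, 5, 8, 9, 10, 11, 14, 15, 12, 16, 17, 17, 17, 20, 21, 22, 17, 17, 24, 25, 26, 17, 17, 29, 30, 31, 17, 14, 33, 34, 17, 17, 20, 36, 17, 25, 17]]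

def MOut (x : Fin 4) (i : Fin 37) : Fin 4 := (a2moutL.getD x.1 []).getD i.1 0

def MTr (x : Fin 4) (i : Fin 37) : Fin 37 := (a2mtrL.getD x.1 []).getD i.1 0

/-- Left multiplication of a semigroup element by a generator. -/
def LMul (q : Fin 2) (i : Fin 37) : Fin 37 := (a2lmulL.getD q.1 []).getD i.1 0

def emb (q : Fin 2) : Fin 37 := ⟨q.1, by omega⟩

theorem gen_eq (q : Fin 2) : autTrans a2Tr a2Out q = autTrans MTr MOut (emb q) := by
  apply stateSeq_bisim _ _ _ _ (fun q1 q2 => q2 = emb q1)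
  · rintro q1 _ rfl x
    revert q1 x
    decide
  · rintro q1 _ rfl x
    show MTr x (emb q1) = emb (a2Tr x q1)
    revert q1 x
    decide
  · rfl

theorem lmul_eq (q : Fin 2) (i : Fin 37) :
    autTrans a2Tr a2Out q ∘ autTrans MTr MOut i = autTrans MTr MOut (LMul q i) := by
  rw [autTrans_comp]
  apply stateSeq_bisim _ _ _ _ (fun (p : Fin 2 × Fin 37) j => j = LMul p.1 p.2)
  · rintro p _ rfl x
    show a2Out (MOut x p.2) p.1 = MOut x (LMul p.1 p.2)
    revert p x
    decide
  · rintro p _ rfl x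
    show MTr x (LMul p.1 p.2) = LMul (a2Tr (MOut x p.2) p.1) (MTr x p.2)
    revert p x
    decide
  · rfl

/-! ### Words of generators and their semigroup elements -/

def phiW : List (Fin 2) → Fin 37
  | [] => 0
  | [q] => emb q
  | q :: w => LMul q (phiW w)

theorem wordTrans_eq_phi : ∀ w : List (Fin 2), w ≠ [] →
    wordTrans a2Tr a2Out w = autTrans MTr MOut (phiW w) := by
  intro w
  induction w with
  | nil => intro h; exact absurd rfl h
  | cons q w ih =>
    intro _
    cases w with
    | nil =>
      show autTrans a2Tr a2Out q ∘ id = _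
      rw [Function.comp_id, gen_eq]
      rfl
    | cons a l =>
      rw [wordTrans_cons, ih (by simp), lmul_eq]
      rfl

def stepF (S : Finset (Fin 37)) : Finset (Fin 37) := S.image (LMul 0) ∪ S.image (LMul 1)

def TSet : ℕ → Finset (Fin 37)
  | 0 => {0, 1}
  | n + 1 => stepF (TSet n)

theorem phi_mem : ∀ (n : ℕ) (w : List (Fin 2)), w.length = n + 1 → phiW w ∈ TSet n := by
  intro n
  induction n with
  | zero =>
    intro w hw
    match w, hw with
    | [q], _ =>
      show emb q ∈ ({0, 1} : Finset (Fin 37))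
      fin_cases q <;> decide
  | succ n ih =>
    intro w hw
    match w, hw with
    | q :: a :: l, hw =>
      have h1 : phiW (a :: l) ∈ TSet n := ih _ (by simpa using hw)
      have h2 : phiW (q :: a :: l) = LMul q (phiW (a :: l)) := rfl
      rw [h2]
      show _ ∈ stepF (TSet n)
      fin_cases q
      · exact Finset.mem_union_left _ (Finset.mem_image_of_mem _ h1)
      · exact Finset.mem_union_right _ (Finset.mem_image_of_mem _ h1)

theorem phi_surj : ∀ (n : ℕ) (i : Fin 37), i ∈ TSet n →
    ∃ w : List (Fin 2), w.length = n + 1 ∧ phiW w = i := by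
  intro n
  induction n with
  | zero =>
    intro i hi
    rcases Finset.mem_insert.mp hi with h | h
    · exact ⟨[0], rfl, by rw [h]; rfl⟩
    · exact ⟨[1], rfl, by rw [Finset.mem_singleton.mp h]; rfl⟩
  | succ n ih =>
    intro i hi
    rcases Finset.mem_union.mp hi with h | h <;>
      obtain ⟨j, hj, hji⟩ := Finset.mem_image.mp h <;>
      obtain ⟨w, hw1, hw2⟩ := ih j hj
    · refine ⟨0 :: w, by simp [hw1], ?_⟩
      match w, hw1 with
      | a :: l, _ => show LMul 0 (phiW (a :: l)) = i; rw [hw2, hji]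
    · refine ⟨1 :: w, by simp [hw1], ?_⟩
      match w, hw1 with
      | a :: l, _ => show LMul 1 (phiW (a :: l)) = i; rw [hw2, hji]

/-! ### Separating the states of the minimized machine -/

def runM : Fin 37 → List (Fin 4) → List (Fin 4)
  | _, [] => []
  | i, x :: xs => MOut x i :: runM (MTr x i) xs

theorem runM_length : ∀ (w : List (Fin 4)) (i : Fin 37), (runM i w).length = w.length := by
  intro w
  induction w with
  | nil => intro i; rfl
  | cons x xs ih => intro i; show (runM i (x :: xs)).length = _; rw [runM]; simp [ih]

theorem runM_getD : ∀ (w : List (Fin 4)) (i : Fin 37) (u : ℕ → Fin 4),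
    (∀ k, k < w.length → u k = w.getD k 0) →
    ∀ k, k < w.length → (runM i w).getD k 0 = autTrans MTr MOut i u k := by
  intro w
  induction w with
  | nil => intro i u _ k hk; simp at hk
  | cons x xs ih =>
    intro i u hu k hk
    have hu0 : u 0 = x := hu 0 (by simp)
    cases k with
    | zero =>
      show MOut x i = MOut (u 0) (stateSeq MTr i u 0)
      rw [hu0]; rfl
    | succ k =>
      have hk' : k < xs.length := by simpa using hk
      have hrec := ih (MTr x i) (fun m => u (m + 1))
        (fun m hm => by simpa using hu (m + 1) (by simpa using Nat.succ_lt_succ hm)) k hk'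
      rw [autTrans_shift, hu0]
      show (runM i (x :: xs)).getD (k + 1) 0 = _
      rw [runM, List.getD_cons_succ]
      exact hrec

theorem autTrans_M_inj : Function.Injective (fun i : Fin 37 => autTrans MTr MOut i) := by
  intro i j h
  have key : ∀ w : List (Fin 4), runM i w = runM j w := by
    intro w
    apply List.ext_getElem (by rw [runM_length, runM_length])
    intro k h1 h2
    rw [← List.getD_eq_getElem (runM i w) 0 h1, ← List.getD_eq_getElem (runM j w) 0 h2]
    rw [runM_length] at h1
    rw [runM_getD w i (fun n => w.getD n 0) (fun _ _ => rfl) k h1,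
      runM_getD w j (fun n => w.getD n 0) (fun _ _ => rfl) k h1,
      show autTrans MTr MOut i = autTrans MTr MOut j from h]
  have hsep : ∀ i j : Fin 37,
      runM i [1, 1, 3, 1, 2] = runM j [1, 1, 3, 1, 2] →
      runM i [2, 1, 0] = runM j [2, 1, 0] →
      runM i [0, 0] = runM j [0, 0] →
      runM i [3, 0] = runM j [3, 0] → i = j := by decide
  exact hsep i j (key _) (key _) (key _) (key _)

/-! ### Counting -/

theorem growth_eq_card (n : ℕ) : growth a2Tr a2Out (n + 1) = (TSet n).card := by
  have hset : { g : (ℕ → Fin 4) → (ℕ → Fin 4) |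
      ∃ w : List (Fin 2), w.length = n + 1 ∧ wordTrans a2Tr a2Out w = g } =
      (fun i : Fin 37 => autTrans MTr MOut i) '' ↑(TSet n) := by
    ext g
    constructor
    · rintro ⟨w, hw, rfl⟩
      exact ⟨phiW w, phi_mem n w hw,
        (wordTrans_eq_phi w (by rintro rfl; simp at hw)).symm⟩
    · rintro ⟨i, hi, rfl⟩
      obtain ⟨w, hw1, hw2⟩ := phi_surj n i hi
      exact ⟨w, hw1, by rw [wordTrans_eq_phi w (by rintro rfl; simp at hw1), hw2]⟩
  rw [growth, hset, Set.ncard_image_of_injective _ autTrans_M_inj, Set.ncard_coe_finset]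

theorem TSet_period : ∀ j : ℕ, TSet (5 + j + 4) = TSet (5 + j) := by
  intro j
  induction j with
  | zero => decide
  | succ k ih =>
    have h1 : 5 + (k + 1) + 4 = (5 + k + 4) + 1 := by omega
    have h2 : 5 + (k + 1) = (5 + k) + 1 := by omega
    rw [h1, h2]
    show stepF (TSet (5 + k + 4)) = stepF (TSet (5 + k))
    rw [ih]

theorem TSet_card : ∀ m : ℕ, (TSet (2 * m + 3)).card = 8 ∧ (TSet (2 * m + 4)).card = 9 := by
  intro m
  induction m using Nat.strong_induction_on with
  | _ m ih =>
    match m with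
    | 0 => exact ⟨by decide, by decide⟩
    | 1 => exact ⟨by decide, by decide⟩
    | 2 => exact ⟨by decide, by decide⟩
    | (k + 3) =>
      have h1 : TSet (2 * (k + 3) + 3) = TSet (2 * (k + 1) + 3) := by
        have h := TSet_period (2 * k)
        have e : 5 + 2 * k + 4 = 2 * (k + 3) + 3 := by omega
        have e' : 5 + 2 * k = 2 * (k + 1) + 3 := by omega
        rw [e, e'] at h
        exact h
      have h2 : TSet (2 * (k + 3) + 4) = TSet (2 * (k + 1) + 4) := by
        have h := TSet_period (2 * k + 1)
        have e : 5 + (2 * k + 1) + 4 = 2 * (k + 3) + 4 := by omega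
        have e' : 5 + (2 * k + 1) = 2 * (k + 1) + 4 := by omega
        rw [e, e'] at h
        exact h
      obtain ⟨c1, c2⟩ := ih (k + 1) (by omega)
      constructor
      · rw [h1]
        exact c1
      · rw [h2]
        exact c2

/-- The growth function `γ` of `A₂` satisfies `γ(1) = 2`, `γ(2) = 4`, `γ(3) = 7`, and for
every `n ≥ 2`, `γ(2n) = 8` and `γ(2n+1) = 9`; in particular `γ` is non-monotonic
(`γ(2n+1) = 9 > 8 = γ(2n+2)` for `n ≥ 2`) and of constant growth order. -/
theorem growth_a2 :
    growth a2Tr a2Out 1 = 2 ∧ growth a2Tr a2Out 2 = 4 ∧ growth a2Tr a2Out 3 = 7 ∧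
    (∀ n : ℕ, 2 ≤ n → growth a2Tr a2Out (2 * n) = 8 ∧ growth a2Tr a2Out (2 * n + 1) = 9) ∧
    (∀ n : ℕ, 2 ≤ n → growth a2Tr a2Out (2 * n + 2) < growth a2Tr a2Out (2 * n + 1)) := by
  have key : ∀ n : ℕ, 2 ≤ n →
      growth a2Tr a2Out (2 * n) = 8 ∧ growth a2Tr a2Out (2 * n + 1) = 9 := by
    intro n hn
    obtain ⟨m, rfl⟩ : ∃ m, n = m + 2 := ⟨n - 2, by omega⟩
    have e1 : 2 * (m + 2) = (2 * m + 3) + 1 := by omega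
    have e2 : 2 * (m + 2) + 1 = (2 * m + 4) + 1 := by omega
    constructor
    · rw [e1, growth_eq_card]
      exact (TSet_card m).1
    · rw [e2, growth_eq_card]
      exact (TSet_card m).2
  refine ⟨?_, ?_, ?_, key, ?_⟩
  · have h := growth_eq_card 0
    rw [show (0 : ℕ) + 1 = 1 from rfl] at h
    rw [h]
    decide
  · have h := growth_eq_card 1
    rw [show (1 : ℕ) + 1 = 2 from rfl] at h
    rw [h]
    decide
  · have h := growth_eq_card 2
    rw [show (2 : ℕ) + 1 = 3 from rfl] at h
    rw [h]
    decide
  · intro n hn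
    have ha := (key (n + 1) (by omega)).1
    have hb := (key n hn).2
    have e : 2 * (n + 1) = 2 * n + 2 := by omega
    rw [e] at ha
    rw [ha, hb]
    omega
end

section
/- For n ≥ 1 let d(n) be the number of partitions of n into 'sequential' powers of 2, i.e. the number of tuples (p₀, p₁, …, p_k) with k ≥ 0, p_i ≥ 1 for all 0 ≤ i ≤ k, and Σ_{i=0}^{k} p_i·2^i = n; set d(0) = 1. Then for every integer n ≥ 3, d(n) = Σ_{i=0}^{⌊(n−1)/2⌋} d(i). -/
namespace SeqPartAux

/-- Weighted sum `Σ pᵢ · 2^i`. -/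
def W (l : List ℕ) : ℕ := (l.mapIdx fun i p => p * 2 ^ i).sum

lemma W_shift (l : List ℕ) (k : ℕ) :
    (l.mapIdx fun i p => p * 2 ^ (i + k)).sum = 2 ^ k * W l := by
  induction l generalizing k with
  | nil => simp [W]
  | cons a t ih =>
    have hfun : (fun i p => p * 2 ^ (i + 1 + k)) = (fun i p => p * 2 ^ (i + (k + 1)) : ℕ → ℕ → ℕ) := by
      funext i p
      congr 2
      omega
    simp only [W, List.mapIdx_cons, List.sum_cons, hfun] at *
    rw [ih (k + 1), ih 1]
    ring

lemma W_cons (a : ℕ) (t : List ℕ) : W (a :: t) = a + 2 * W t := by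
  have h := W_shift t 1
  simp only [W, List.mapIdx_cons, List.sum_cons, pow_zero, mul_one] at h ⊢
  rw [h]
  ring

lemma one_le_W {t : List ℕ} (ht : t ≠ []) (hp : ∀ p ∈ t, 1 ≤ p) : 1 ≤ W t := by
  cases t with
  | nil => simp at ht
  | cons a s =>
    have := W_cons a s
    have ha : 1 ≤ a := hp a (by simp)
    omega

/-- The set of sequential partitions of `n`. -/
def S (n : ℕ) : Set (List ℕ) :=
  { l : List ℕ | l ≠ [] ∧ (∀ p ∈ l, 1 ≤ p) ∧ W l = n }

/-- `S' m`: the possible tails. -/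
def S' (m : ℕ) : Set (List ℕ) := if m = 0 then {([] : List ℕ)} else S m

lemma decomp {n : ℕ} (hn : 1 ≤ n) :
    S n = ⋃ m ∈ Finset.range ((n - 1) / 2 + 1), (fun t => (n - 2 * m) :: t) '' S' m := by
  ext l
  simp only [Set.mem_iUnion, Finset.mem_range, Set.mem_image]
  constructor
  · rintro ⟨hne, hp, hw⟩
    obtain ⟨a, t, rfl⟩ : ∃ a t, l = a :: t := by
      cases l with
      | nil => exact absurd rfl hne
      | cons a t => exact ⟨a, t, rfl⟩
    have hwc := W_cons a t
    have ha : 1 ≤ a := hp a (by simp)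
    refine ⟨W t, by omega, t, ?_, by simp [S]; omega⟩
    by_cases ht : t = []
    · subst ht; simp [S', W]
    · have h1 : 1 ≤ W t := one_le_W ht fun p hp' => hp p (by simp [hp'])
      simp only [S', if_neg (by omega : W t ≠ 0)]
      exact ⟨ht, fun p hp' => hp p (by simp [hp']), rfl⟩
  · rintro ⟨m, hm, t, ht, rfl⟩
    have hm2 : 2 * m ≤ n - 1 := by omega
    have hwt : W t = m ∧ ∀ p ∈ t, 1 ≤ p := by
      by_cases h0 : m = 0
      · subst h0; simp [S'] at ht; subst ht; simp [W]
      · simp only [S', if_neg h0, S] at ht; exact ⟨ht.2.2, ht.2.1⟩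
    refine ⟨by simp, ?_, ?_⟩
    · intro p hp'
      rcases List.mem_cons.mp hp' with h | h
      · omega
      · exact hwt.2 p h
    · rw [W_cons, hwt.1]; omega

lemma S'_finite_of (m : ℕ) (h : (S m).Finite) : (S' m).Finite := by
  by_cases h0 : m = 0
  · simp [S', h0]
  · simpa [S', h0] using h

lemma S_finite (n : ℕ) : (S n).Finite := by
  induction n using Nat.strong_induction_on with
  | _ n ih =>
    rcases Nat.eq_zero_or_pos n with h0 | h1
    · subst h0
      convert Set.finite_empty
      ext l
      simp only [S, Set.mem_setOf_eq, Set.mem_empty_iff_false, iff_false, not_and]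
      intro hne hp
      have := one_le_W hne hp
      omega
    · rw [decomp h1]
      refine Set.Finite.biUnion (Finset.range _).finite_toSet fun m hm => ?_
      simp only [Finset.coe_sort_coe, Finset.mem_coe, Finset.mem_range] at hm
      exact Set.Finite.image _ (S'_finite_of m (by
        by_cases h0 : m = 0
        · subst h0
          convert Set.finite_empty
          ext l
          simp only [S, Set.mem_setOf_eq, Set.mem_empty_iff_false, iff_false, not_and]
          intro hne hp
          have := one_le_W hne hp
          omega
        · exact ih m (by omega)))

/-- Generic: card of pairwise-disjoint finite biUnion over a finset. -/
lemma ncard_biUnion {α β : Type*} (s : Finset α) (f : α → Set β) :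
    (∀ a ∈ s, (f a).Finite) →
    (∀ a ∈ s, ∀ b ∈ s, a ≠ b → Disjoint (f a) (f b)) →
    (⋃ a ∈ s, f a).ncard = ∑ a ∈ s, (f a).ncard := by
  classical
  induction s using Finset.induction_on with
  | empty => simp
  | @insert x s hx ih =>
    intro hfin hdisj
    have hfx : (f x).Finite := hfin x (Finset.mem_insert_self x s)
    have hfU : (⋃ a ∈ s, f a).Finite :=
      Set.Finite.biUnion s.finite_toSet fun a ha =>
        hfin a (Finset.mem_insert_of_mem (Finset.mem_coe.mp ha))
    have hdj : Disjoint (f x) (⋃ a ∈ s, f a) :=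
      Set.disjoint_iUnion₂_right.mpr fun a ha =>
        hdisj x (Finset.mem_insert_self x s) a (Finset.mem_insert_of_mem ha)
          (by rintro rfl; exact hx ha)
    have hU : (⋃ a ∈ insert x s, f a) = f x ∪ ⋃ a ∈ s, f a := by
      simp [Set.biUnion_insert]
    rw [Finset.sum_insert hx, hU, Set.ncard_union_eq hdj hfx hfU,
      ih (fun a ha => hfin a (Finset.mem_insert_of_mem ha))
        (fun a ha b hb hab => hdisj a (Finset.mem_insert_of_mem ha) b
          (Finset.mem_insert_of_mem hb) hab)]

lemma W_mem_S' {m : ℕ} {t : List ℕ} (ht : t ∈ S' m) : W t = m := by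
  by_cases h0 : m = 0
  · subst h0; simp [S'] at ht; subst ht; simp [W]
  · simp only [S', if_neg h0, S] at ht; exact ht.2.2

end SeqPartAux

/-- `seqPartCount n` is the number of partitions of `n` into "sequential" powers of `2`:
the number of tuples `(p₀, p₁, …, p_k)` with `k ≥ 0`, `p_i ≥ 1` for all `i`, and
`Σ_{i=0}^{k} p_i·2^i = n`, encoded as nonempty lists of positive integers; by convention
`seqPartCount 0 = 1`. -/
noncomputable def seqPartCount (n : ℕ) : ℕ :=
  if n = 0 then 1 else
    Set.ncard { l : List ℕ | l ≠ [] ∧ (∀ p ∈ l, 1 ≤ p) ∧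
      (l.mapIdx fun i p => p * 2 ^ i).sum = n }

namespace SeqPartAux

lemma seqPartCount_eq_ncard {n : ℕ} (hn : n ≠ 0) : seqPartCount n = (S n).ncard := by
  rw [seqPartCount, if_neg hn]; rfl

lemma ncard_S' (m : ℕ) : (S' m).ncard = seqPartCount m := by
  by_cases h0 : m = 0
  · simp [S', h0, seqPartCount]
  · rw [seqPartCount_eq_ncard h0, S', if_neg h0]

end SeqPartAux

/-- For every `n ≥ 3`, the number of partitions of `n` into sequential powers of `2`
satisfies `d(n) = Σ_{i=0}^{⌊(n−1)/2⌋} d(i)`. -/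
theorem seqPartCount_sum (n : ℕ) (hn : 3 ≤ n) :
    seqPartCount n = ∑ i ∈ Finset.range ((n - 1) / 2 + 1), seqPartCount i := by
  open SeqPartAux in
  rw [seqPartCount_eq_ncard (by omega), decomp (by omega),
    ncard_biUnion _ _ (fun m _ => Set.Finite.image _ (S'_finite_of m (S_finite m)))
      ?_]
  · refine Finset.sum_congr rfl fun m _ => ?_
    rw [Set.ncard_image_of_injective _ (fun a b h => by simpa using h), ncard_S']
  · intro a _ b _ hab
    rw [Set.disjoint_left]
    rintro l ⟨t, ht, rfl⟩ ⟨t', ht', heq⟩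
    have h1 := W_mem_S' ht
    have h2 := W_mem_S' ht'
    have : t' = t := by simpa using congrArg List.tail heq
    subst this
    omega
end
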